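/- For every threshold τ > 0, the generalized linear-core surrogate Φ̄_τ is convex on ℝ and continuously differentiable on ℝ (of class C¹), with Φ̄_τ'(u) = −1 for every u ∈ [−τ, τ]. -/

import Mathlib

open Set Filter Topology

/-- A differentiable real function with monotone derivative has continuous derivative
(by Darboux's theorem). -/
lemma continuous_deriv_of_monotone_aux {f : ℝ → ℝ} (hf : Differentiable ℝ f)
    (hm : Monotone (deriv f)) : Continuous (deriv f) := by
  rw [continuous_iff_continuousAt]
  intro a
  rw [continuousAt_iff_continuous_left_right]
  constructor
  · by_cases h : ∃ c, deriv f c < deriv f a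
    · obtain ⟨c, hc⟩ := h
      refine continuousWithinAt_left_of_monotoneOn_of_exists_between
        (hm.monotoneOn _) univ_mem (fun b hb => ?_)
      obtain ⟨y, hy1, hy2⟩ := exists_between (max_lt hb hc : max b (deriv f c) < deriv f a)
      have hca : c ≤ a := (hm.reflect_lt hc).le
      obtain ⟨x, -, hx⟩ := exists_hasDerivWithinAt_eq_of_gt_of_lt hca
        (fun x _ => (hf x).hasDerivAt.hasDerivWithinAt)
        ((le_max_right b _).trans_lt hy1) hy2
      exact ⟨x, trivial, by rw [hx]; exact ⟨(le_max_left b _).trans_lt hy1, hy2⟩⟩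
    · push_neg at h
      exact continuousWithinAt_const.congr (fun x hx => le_antisymm (hm hx) (h x)) rfl
  · by_cases h : ∃ c, deriv f a < deriv f c
    · obtain ⟨c, hc⟩ := h
      refine continuousWithinAt_right_of_monotoneOn_of_exists_between
        (hm.monotoneOn _) univ_mem (fun b hb => ?_)
      obtain ⟨y, hy1, hy2⟩ := exists_between (lt_min hb hc : deriv f a < min b (deriv f c))
      have hac : a ≤ c := (hm.reflect_lt hc).le
      obtain ⟨x, -, hx⟩ := exists_hasDerivWithinAt_eq_of_gt_of_lt hac
        (fun x _ => (hf x).hasDerivAt.hasDerivWithinAt)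
        hy1 (hy2.trans_le (min_le_right b _))
      exact ⟨x, trivial, by rw [hx]; exact ⟨hy1, hy2.trans_le (min_le_left b _)⟩⟩
    · push_neg at h
      exact continuousWithinAt_const.congr (fun x hx => le_antisymm (h x) (hm hx)) rfl

/-- The generalized linear-core surrogate `Φ̄_τ` with threshold `τ > 0`:
`Φ̄_τ(u) = -u + τ + Φ(0)/Φ'(0)` for `-τ ≤ u ≤ τ`, `Φ̄_τ(u) = Φ(τ-u)/Φ'(0)` for `u > τ`,
and `Φ̄_τ(u) = Φ(-τ-u)/Φ'(0) + 2τ` for `u < -τ`. -/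
noncomputable def barPhiTau (Φ : ℝ → ℝ) (τ : ℝ) (u : ℝ) : ℝ :=
  if τ < u then Φ (τ - u) / deriv Φ 0
  else if u < -τ then Φ (-τ - u) / deriv Φ 0 + 2 * τ
  else -u + τ + Φ 0 / deriv Φ 0

/-- for every `τ > 0`, the generalized linear-core surrogate `Φ̄_τ` is
convex on `ℝ` and continuously differentiable (class `C¹`), with derivative `-1` on
`[-τ, τ]`. -/
theorem barPhiTau_convex_contDiff (Φ : ℝ → ℝ)
    (hconv : ConvexOn ℝ Set.univ Φ) (hdiff : Differentiable ℝ Φ)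
    (hnn : ∀ u, 0 ≤ Φ u) (hd0 : 0 < deriv Φ 0)
    (τ : ℝ) (hτ : 0 < τ) :
    ConvexOn ℝ Set.univ (barPhiTau Φ τ) ∧ ContDiff ℝ 1 (barPhiTau Φ τ) ∧
      ∀ u ∈ Set.Icc (-τ) τ, deriv (barPhiTau Φ τ) u = -1 := by
  set d0 := deriv Φ 0 with hd0def
  have hmono : Monotone (deriv Φ) :=
    monotoneOn_univ.mp (hconv.monotoneOn_deriv (fun x _ => hdiff x))
  have hcontd : Continuous (deriv Φ) := continuous_deriv_of_monotone_aux hdiff hmono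
  -- the candidate derivative
  set g : ℝ → ℝ := fun u => -(deriv Φ (min (τ - u) 0 + max (-τ - u) 0)) / d0 with hgdef
  -- derivatives of the three branches
  have hR : ∀ u : ℝ, HasDerivAt (fun x => Φ (τ - x) / d0) (-(deriv Φ (τ - u)) / d0) u := by
    intro u
    have h1 : HasDerivAt (fun x : ℝ => τ - x) (-1) u := (hasDerivAt_id u).const_sub τ
    have h2 := ((hdiff (τ - u)).hasDerivAt.comp u h1).div_const d0
    rw [show -(deriv Φ (τ - u)) / d0 = deriv Φ (τ - u) * -1 / d0 by ring]; exact h2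
  have hL : ∀ u : ℝ, HasDerivAt (fun x => Φ (-τ - x) / d0 + 2 * τ)
      (-(deriv Φ (-τ - u)) / d0) u := by
    intro u
    have h1 : HasDerivAt (fun x : ℝ => -τ - x) (-1) u := (hasDerivAt_id u).const_sub (-τ)
    have h2 := (((hdiff (-τ - u)).hasDerivAt.comp u h1).div_const d0).add_const (2 * τ)
    rw [show -(deriv Φ (-τ - u)) / d0 = deriv Φ (-τ - u) * -1 / d0 by ring]; exact h2
  have hM : ∀ u : ℝ, HasDerivAt (fun x : ℝ => -x + τ + Φ 0 / d0) (-1) u := by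
    intro u
    simpa using (((hasDerivAt_id u).neg.add_const τ).add_const (Φ 0 / d0))
  -- value of g in the three regions
  have hgR : ∀ u : ℝ, τ < u → g u = -(deriv Φ (τ - u)) / d0 := by
    intro u hu
    have h1 : min (τ - u) 0 = τ - u := min_eq_left (by linarith)
    have h2 : max (-τ - u) 0 = 0 := max_eq_right (by linarith)
    simp [hgdef, h1, h2]
  have hgL : ∀ u : ℝ, u < -τ → g u = -(deriv Φ (-τ - u)) / d0 := by
    intro u hu
    have h1 : min (τ - u) 0 = 0 := min_eq_right (by linarith)
    have h2 : max (-τ - u) 0 = -τ - u := max_eq_left (by linarith)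
    simp [hgdef, h1, h2]
  have hgM : ∀ u : ℝ, -τ ≤ u → u ≤ τ → g u = -1 := by
    intro u hu1 hu2
    have h1 : min (τ - u) 0 = 0 := min_eq_right (by linarith)
    have h2 : max (-τ - u) 0 = 0 := max_eq_right (by linarith)
    simp only [hgdef, h1, h2, add_zero]
    rw [neg_div, div_self hd0.ne']
  -- the key derivative claim
  have key : ∀ u : ℝ, HasDerivAt (barPhiTau Φ τ) (g u) u := by
    intro u
    rcases lt_trichotomy τ u with h1 | h1 | h1
    · -- u > τ
      have heq : barPhiTau Φ τ =ᶠ[𝓝 u] fun x => Φ (τ - x) / d0 := by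
        filter_upwards [Ioi_mem_nhds h1] with x hx
        have hx' : τ < x := hx
        simp [barPhiTau, hx', ← hd0def]
      rw [hgR u h1]
      exact (hR u).congr_of_eventuallyEq heq
    · -- u = τ
      subst h1
      have hIci : HasDerivWithinAt (barPhiTau Φ τ) (-1) (Ici τ) τ := by
        have hs : ∀ x ∈ Ici τ, barPhiTau Φ τ x = Φ (τ - x) / d0 := by
          intro x hx
          rcases eq_or_lt_of_le (mem_Ici.mp hx) with rfl | hx'
          · simp [barPhiTau, hτ.not_gt, lt_irrefl, ← hd0def]
          · simp [barPhiTau, hx', ← hd0def]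
        have h0 : HasDerivWithinAt (fun x => Φ (τ - x) / d0) (-1) (Ici τ) τ := by
          have := (hR τ).hasDerivWithinAt (s := Ici τ)
          rwa [sub_self, ← hd0def, neg_div, div_self hd0.ne'] at this
        exact h0.congr hs (hs τ self_mem_Ici)
      have hIic : HasDerivWithinAt (barPhiTau Φ τ) (-1) (Iic τ) τ := by
        have h0 := (hM τ).hasDerivWithinAt (s := Iic τ)
        refine h0.congr_of_eventuallyEq ?_ (by simp [barPhiTau, lt_irrefl τ, (by linarith : ¬ τ < -τ), ← hd0def])
        filter_upwards [mem_nhdsWithin_of_mem_nhds (Ioi_mem_nhds (by linarith : -τ < τ)),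
          self_mem_nhdsWithin] with x hx1 hx2
        have hA : ¬ τ < x := not_lt.mpr hx2
        have hB : ¬ x < -τ := not_lt.mpr (le_of_lt hx1)
        simp [barPhiTau, hA, hB, ← hd0def]
      have := hIic.union hIci
      rw [Iic_union_Ici, hasDerivWithinAt_univ] at this
      rw [hgM τ (by linarith) le_rfl]
      exact this
    · -- u < τ
      rcases lt_trichotomy u (-τ) with h2 | h2 | h2
      · -- u < -τ
        have heq : barPhiTau Φ τ =ᶠ[𝓝 u] fun x => Φ (-τ - x) / d0 + 2 * τ := by
          filter_upwards [Iio_mem_nhds h2] with x hx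
          have hx' : x < -τ := hx
          have hA : ¬ τ < x := by linarith
          simp [barPhiTau, hA, hx', ← hd0def]
        rw [hgL u h2]
        exact (hL u).congr_of_eventuallyEq heq
      · -- u = -τ
        subst h2
        have hIic : HasDerivWithinAt (barPhiTau Φ τ) (-1) (Iic (-τ)) (-τ) := by
          have hs : ∀ x ∈ Iic (-τ), barPhiTau Φ τ x = Φ (-τ - x) / d0 + 2 * τ := by
            intro x hx
            rcases eq_or_lt_of_le (mem_Iic.mp hx) with rfl | hx'
            · have hA : ¬ τ < -τ := by linarith
              simp [barPhiTau, hA, lt_irrefl, ← hd0def]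
              ring
            · have hA : ¬ τ < x := by linarith
              simp [barPhiTau, hA, hx', ← hd0def]
          have h0 : HasDerivWithinAt (fun x => Φ (-τ - x) / d0 + 2 * τ) (-1) (Iic (-τ)) (-τ) := by
            have := (hL (-τ)).hasDerivWithinAt (s := Iic (-τ))
            rwa [sub_neg_eq_add, neg_add_cancel, ← hd0def, neg_div, div_self hd0.ne'] at this
          exact h0.congr hs (hs (-τ) self_mem_Iic)
        have hIci : HasDerivWithinAt (barPhiTau Φ τ) (-1) (Ici (-τ)) (-τ) := by
          have h0 := (hM (-τ)).hasDerivWithinAt (s := Ici (-τ))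
          refine h0.congr_of_eventuallyEq ?_
            (by simp [barPhiTau, (by linarith : ¬ τ < -τ), lt_irrefl, ← hd0def])
          filter_upwards [mem_nhdsWithin_of_mem_nhds (Iio_mem_nhds (by linarith : -τ < τ)),
            self_mem_nhdsWithin] with x hx1 hx2
          have hA : ¬ τ < x := not_lt.mpr (le_of_lt hx1)
          have hB : ¬ x < -τ := not_lt.mpr hx2
          simp [barPhiTau, hA, hB, ← hd0def]
        have := hIic.union hIci
        rw [Iic_union_Ici, hasDerivWithinAt_univ] at this
        rw [hgM (-τ) le_rfl (by linarith)]
        exact this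
      · -- -τ < u < τ
        have heq : barPhiTau Φ τ =ᶠ[𝓝 u] fun x : ℝ => -x + τ + Φ 0 / d0 := by
          filter_upwards [Ioo_mem_nhds h2 h1] with x hx
          have hA : ¬ τ < x := not_lt.mpr hx.2.le
          have hB : ¬ x < -τ := not_lt.mpr hx.1.le
          simp [barPhiTau, hA, hB, ← hd0def]
        rw [hgM u h2.le h1.le]
        exact (hM u).congr_of_eventuallyEq heq
  have hDiff : Differentiable ℝ (barPhiTau Φ τ) := fun u => (key u).differentiableAt
  have hderiv : deriv (barPhiTau Φ τ) = g := funext fun u => (key u).deriv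
  -- monotonicity of g
  have hgmono : Monotone g := by
    intro u v huv
    have hc : min (τ - v) 0 + max (-τ - v) 0 ≤ min (τ - u) 0 + max (-τ - u) 0 :=
      add_le_add (min_le_min (by linarith) le_rfl) (max_le_max (by linarith) le_rfl)
    have := hmono hc
    simp only [hgdef]
    exact (div_le_div_iff_of_pos_right hd0).mpr (neg_le_neg this)
  have hgcont : Continuous g := by
    have : Continuous fun u : ℝ => min (τ - u) 0 + max (-τ - u) 0 :=
      ((continuous_const.sub continuous_id).min continuous_const).add
        ((continuous_const.sub continuous_id).max continuous_const)
    exact ((hcontd.comp this).neg).div_const d0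
  refine ⟨?_, ?_, ?_⟩
  · exact Monotone.convexOn_univ_of_deriv hDiff (hderiv ▸ hgmono)
  · exact contDiff_one_iff_deriv.mpr ⟨hDiff, hderiv ▸ hgcont⟩
  · intro u hu
    rw [hderiv]
    exact hgM u hu.1 hu.2
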